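/- Suppose 2β ∈ ℤ_{≥0} and let P(t) = ∏_{n=0}^{2β}(t/2 + β − n) ∈ ℂ[t]. Then the ideal V = ℂ[s,t]·P(t) is invariant under all the operators defining the module Θ(λ, α, β, γ): specifically, for the operator E_i(g)(s,t) = λ^i·α·(t/2 + β)·g(s−i, t−2), one has E_i(g·P)(s,t) = λ^i·α·(t/2 − β − 1)·g(s−i, t−2)·P(t), so E_i maps V into V; similarly F_i(g·P)(s,t) = −(λ^i/α)·(t/2 + β + 1)·g(s−i, t+2)·P(t), so F_i maps V into V. -/

import Mathlib

open MvPolynomial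

abbrev R2 : Type := MvPolynomial (Fin 2) ℂ

/-- Substitution `g(s,t) ↦ g(s - u, t + v)`. -/
noncomputable def sh (u v : ℂ) : R2 →ₐ[ℂ] R2 := aeval ![X 0 - C u, X 1 + C v]

/-- Action of `e_i` in `Θ(λ,α,β,γ)`. -/
noncomputable def thE (lam a b : ℂ) (i : ℤ) (g : R2) : R2 :=
  C (lam ^ i * a) * (C 2⁻¹ * X 1 + C b) * sh (i : ℂ) (-2) g

/-- Action of `f_i` in `Θ(λ,α,β,γ)`. -/
noncomputable def thF (lam a b : ℂ) (i : ℤ) (g : R2) : R2 :=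
  C (-(lam ^ i / a)) * (C 2⁻¹ * X 1 - C b) * sh (i : ℂ) 2 g

/-- Action of `h_i`. -/
noncomputable def opH (lam : ℂ) (i : ℤ) (g : R2) : R2 :=
  C (lam ^ i) * X 1 * sh (i : ℂ) 0 g

/-- Action of `d_i`. -/
noncomputable def opD (lam c : ℂ) (i : ℤ) (g : R2) : R2 :=
  C (lam ^ i) * (X 0 + C ((i : ℂ) * c)) * sh (i : ℂ) 0 g

lemma sh_lin (u v c : ℂ) : sh u v (C 2⁻¹ * X 1 + C c) = C 2⁻¹ * X 1 + C (c + 2⁻¹ * v) := by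
  simp [sh]; ring

lemma keys (b : ℂ) (N : ℕ) (hN : (N : ℂ) = 2 * b) (u : ℂ)
    (P : R2) (hP : P = ∏ n ∈ Finset.range (N + 1), (C 2⁻¹ * X 1 + C (b - (n : ℂ)))) :
    (C 2⁻¹ * X 1 + C b) * sh u (-2) P = (C 2⁻¹ * X 1 - C b - 1) * P ∧
    (C 2⁻¹ * X 1 - C b) * sh u 2 P = (C 2⁻¹ * X 1 + C b + 1) * P := by
  set f : ℕ → R2 := fun n => C 2⁻¹ * X 1 + C (b - n) with hf
  set g : ℕ → R2 := fun n => C 2⁻¹ * X 1 + C (b + 1 - n) with hg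
  have hC : ∀ c d : ℂ, c = d → (C c : R2) = C d := fun c d h => by rw [h]
  have h1 : sh u (-2) P = ∏ n ∈ Finset.range (N + 1), f (n + 1) := by
    rw [hP, map_prod]
    refine Finset.prod_congr rfl fun n _ => ?_
    rw [sh_lin]; simp only [hf]
    congr 1
    apply hC; push_cast; ring
  have h2 : sh u 2 P = ∏ n ∈ Finset.range (N + 1), g n := by
    rw [hP, map_prod]
    refine Finset.prod_congr rfl fun n _ => ?_
    rw [sh_lin]; simp only [hg]
    congr 1
    apply hC; ring
  have hf0 : f 0 = C 2⁻¹ * X 1 + C b := by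
    simp only [hf]; congr 1; apply hC; push_cast; ring
  have hfN : f (N + 1) = C 2⁻¹ * X 1 - C b - 1 := by
    simp only [hf]
    rw [hC (b - (↑(N+1) : ℂ)) (-b + -1) (by push_cast; rw [hN]; ring), map_add, map_neg, map_neg,
      map_one]
    ring
  have hgN : g (N + 1) = C 2⁻¹ * X 1 - C b := by
    simp only [hg]
    rw [hC (b + 1 - (↑(N+1) : ℂ)) (-b) (by push_cast; rw [hN]; ring), map_neg]
    ring
  have hg0 : g 0 = C 2⁻¹ * X 1 + C b + 1 := by
    simp only [hg]
    rw [hC (b + 1 - (↑(0:ℕ) : ℂ)) (b + 1) (by push_cast; ring), map_add, map_one]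
    ring
  have hgs : ∀ n ∈ Finset.range (N + 1), g (n + 1) = f n := by
    intro n _; simp only [hf, hg]; congr 1; apply hC; push_cast; ring
  have A : ∏ n ∈ Finset.range (N + 2), f n
      = (∏ n ∈ Finset.range (N + 1), f (n + 1)) * f 0 := Finset.prod_range_succ' f (N + 1)
  have B : ∏ n ∈ Finset.range (N + 2), f n
      = (∏ n ∈ Finset.range (N + 1), f n) * f (N + 1) := Finset.prod_range_succ f (N + 1)
  have Ag : ∏ n ∈ Finset.range (N + 2), g n
      = (∏ n ∈ Finset.range (N + 1), g (n + 1)) * g 0 := Finset.prod_range_succ' g (N + 1)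
  have Bg : ∏ n ∈ Finset.range (N + 2), g n
      = (∏ n ∈ Finset.range (N + 1), g n) * g (N + 1) := Finset.prod_range_succ g (N + 1)
  constructor
  · rw [h1, hP]
    calc (C 2⁻¹ * X 1 + C b) * ∏ n ∈ Finset.range (N + 1), f (n + 1)
        = (∏ n ∈ Finset.range (N + 1), f (n + 1)) * f 0 := by rw [hf0]; ring
      _ = (∏ n ∈ Finset.range (N + 1), f n) * f (N + 1) := by rw [← A, B]
      _ = (C 2⁻¹ * X 1 - C b - 1) * (Finset.range (N + 1)).prod f := by rw [hfN]; ring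
  · rw [h2, hP]
    calc (C 2⁻¹ * X 1 - C b) * ∏ n ∈ Finset.range (N + 1), g n
        = (∏ n ∈ Finset.range (N + 1), g n) * g (N + 1) := by rw [hgN]; ring
      _ = (∏ n ∈ Finset.range (N + 1), g (n + 1)) * g 0 := by rw [← Bg, Ag]
      _ = (C 2⁻¹ * X 1 + C b + 1) * (Finset.range (N + 1)).prod f := by
          rw [hg0, Finset.prod_congr rfl hgs]; ring


theorem stmt8 (lam a : ℂ) (hlam : lam ≠ 0) (ha : a ≠ 0) (b : ℂ)
    (N : ℕ) (hN : (N : ℂ) = 2 * b)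
    (P : R2) (hP : P = ∏ n ∈ Finset.range (N + 1), (C 2⁻¹ * X 1 + C (b - (n : ℂ))))
    (i : ℤ) (g : R2) :
    thE lam a b i (g * P)
        = C (lam ^ i * a) * (C 2⁻¹ * X 1 - C b - 1) * sh (i : ℂ) (-2) g * P ∧
    thF lam a b i (g * P)
        = C (-(lam ^ i / a)) * (C 2⁻¹ * X 1 + C b + 1) * sh (i : ℂ) 2 g * P ∧
    thE lam a b i (g * P) ∈ Ideal.span {P} ∧
    thF lam a b i (g * P) ∈ Ideal.span {P} := by
  obtain ⟨k1, k2⟩ := keys b N hN (i : ℂ) P hP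
  have hE : thE lam a b i (g * P)
      = C (lam ^ i * a) * (C 2⁻¹ * X 1 - C b - 1) * sh (i : ℂ) (-2) g * P := by
    rw [thE, map_mul (sh (i:ℂ) (-2))]
    calc C (lam ^ i * a) * (C 2⁻¹ * X 1 + C b) * (sh (i:ℂ) (-2) g * sh (i:ℂ) (-2) P)
        = C (lam ^ i * a) * sh (i:ℂ) (-2) g * ((C 2⁻¹ * X 1 + C b) * sh (i:ℂ) (-2) P) := by ring
      _ = C (lam ^ i * a) * sh (i:ℂ) (-2) g * ((C 2⁻¹ * X 1 - C b - 1) * P) := by rw [k1]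
      _ = C (lam ^ i * a) * (C 2⁻¹ * X 1 - C b - 1) * sh (i:ℂ) (-2) g * P := by ring
  have hF : thF lam a b i (g * P)
      = C (-(lam ^ i / a)) * (C 2⁻¹ * X 1 + C b + 1) * sh (i : ℂ) 2 g * P := by
    rw [thF, map_mul (sh (i:ℂ) 2)]
    calc C (-(lam ^ i / a)) * (C 2⁻¹ * X 1 - C b) * (sh (i:ℂ) 2 g * sh (i:ℂ) 2 P)
        = C (-(lam ^ i / a)) * sh (i:ℂ) 2 g * ((C 2⁻¹ * X 1 - C b) * sh (i:ℂ) 2 P) := by ring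
      _ = C (-(lam ^ i / a)) * sh (i:ℂ) 2 g * ((C 2⁻¹ * X 1 + C b + 1) * P) := by rw [k2]
      _ = C (-(lam ^ i / a)) * (C 2⁻¹ * X 1 + C b + 1) * sh (i:ℂ) 2 g * P := by ring
  refine ⟨hE, hF, ?_, ?_⟩
  · rw [hE]; exact Ideal.mem_span_singleton.mpr (dvd_mul_left P _)
  · rw [hF]; exact Ideal.mem_span_singleton.mpr (dvd_mul_left P _)
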